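/- For every α, β, γ ∈ {−1, 1}: (i) a three-element subset of the configuration E_{α,β,γ} is collinear in ℙ²(ℝ) if and only if it is one of the twenty-one triples {V₁,S₁,S₅}, {V₁,S₂,S₁₄}, {V₁,S₃,S₆}, {V₁,S₄,S₉}, {V₁,S₇,S₈}, {V₁,S₁₀,S₁₁}, {V₁,S₁₂,S₁₃}, {V₂,S₁,S₄}, {V₂,S₂,S₁₁}, {V₂,S₃,S₇}, {V₂,S₅,S₁₃}, {V₂,S₆,S₈}, {V₂,S₉,S₁₀}, {V₂,S₁₂,S₁₄}, {V₃,S₁,S₈}, {V₃,S₂,S₃}, {V₃,S₄,S₁₀}, {V₃,S₅,S₁₂}, {V₃,S₆,S₇}, {V₃,S₉,S₁₁}, {V₃,S₁₃,S₁₄}; and (ii) every bijection f of E_{α,β,γ} preserving collinearity of triples in both directions satisfies f({V₁,V₂,V₃}) = {V₁,V₂,V₃}. -/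

import Mathlib

noncomputable section

/-- The real projective plane `ℙ²(ℝ)`. -/
abbrev ProjPlaneR := Projectivization ℝ (Fin 3 → ℝ)

/-- A vector `![a,b,c]` with a nonzero coordinate is nonzero. -/
theorem vne (a b c : ℝ) (i : Fin 3) (h : ![a, b, c] i ≠ 0) : ![a, b, c] ≠ 0 :=
  fun he => h (by rw [he]; simp)

/-- The point `(a : b : c)` of `ℙ²(ℝ)`. -/
def mkP (a b c : ℝ) (h : ![a, b, c] ≠ 0) : ProjPlaneR :=
  Projectivization.mk ℝ ![a, b, c] h

/-- A set of points of `ℙ²(ℝ)` lies on a common projective line iff some nonzero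
linear form vanishes on (representatives of) all of them. -/
def ProjCollinear (s : Set ProjPlaneR) : Prop :=
  ∃ f : (Fin 3 → ℝ) →ₗ[ℝ] ℝ, f ≠ 0 ∧ ∀ p ∈ s, f p.rep = 0

/-! The points of the configuration `E_{α,β,γ}`. -/

def V₁ : ProjPlaneR := mkP 0 0 1 (vne _ _ _ 2 (by simp))
def V₂ : ProjPlaneR := mkP 1 0 0 (vne _ _ _ 0 (by norm_num))
def V₃ : ProjPlaneR := mkP 0 1 0 (vne _ _ _ 1 (by norm_num))
def S₁ : ProjPlaneR := mkP 1 2 1 (vne _ _ _ 0 (by norm_num))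
def S₂ : ProjPlaneR := mkP 2 1 1 (vne _ _ _ 0 (by norm_num))
def S₃ : ProjPlaneR := mkP 2 (-4) 1 (vne _ _ _ 0 (by norm_num))
def S₄ : ProjPlaneR := mkP (-4) 2 1 (vne _ _ _ 0 (by norm_num))
def S₅ : ProjPlaneR := mkP 5 10 (-2) (vne _ _ _ 0 (by norm_num))
def S₆ (α : ℝ) : ProjPlaneR := mkP 2 (-4) (α * Real.sqrt 2) (vne _ _ _ 0 (by norm_num))
def S₇ (α : ℝ) : ProjPlaneR := mkP (α * Real.sqrt 2) (-4) 1 (vne _ _ _ 1 (by norm_num))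
def S₈ (α : ℝ) : ProjPlaneR := mkP 1 (-(2 * α * Real.sqrt 2)) 1 (vne _ _ _ 0 (by norm_num))
def S₉ (β : ℝ) : ProjPlaneR := mkP (-4) 2 (β * Real.sqrt 2) (vne _ _ _ 0 (by norm_num))
def S₁₀ (β : ℝ) : ProjPlaneR := mkP (-4) (β * Real.sqrt 2) 1 (vne _ _ _ 0 (by norm_num))
def S₁₁ (β : ℝ) : ProjPlaneR := mkP (-(2 * β * Real.sqrt 2)) 1 1 (vne _ _ _ 1 (by norm_num))
def S₁₂ (γ : ℝ) : ProjPlaneR := mkP 5 (5 * γ) (-2) (vne _ _ _ 0 (by norm_num))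
def S₁₃ (γ : ℝ) : ProjPlaneR := mkP (5 * γ) 5 (-1) (vne _ _ _ 1 (by norm_num))
def S₁₄ (γ : ℝ) : ProjPlaneR := mkP 10 5 (-(2 * γ)) (vne _ _ _ 0 (by norm_num))

/-- The configuration `E_{α,β,γ}` as a set of 17 points of `ℙ²(ℝ)`. -/
def Econf (α β γ : ℝ) : Set ProjPlaneR :=
  {V₁, V₂, V₃, S₁, S₂, S₃, S₄, S₅, S₆ α, S₇ α, S₈ α, S₉ β, S₁₀ β, S₁₁ β,
   S₁₂ γ, S₁₃ γ, S₁₄ γ}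

namespace St18

/-! ### Arithmetic in `ℤ[√2]` encoded as pairs of integers -/

abbrev P2 := Int × Int
def pmul (a b : P2) : P2 := (a.1*b.1 + 2*a.2*b.2, a.1*b.2 + a.2*b.1)
def psub (a b : P2) : P2 := (a.1-b.1, a.2-b.2)
def padd (a b : P2) : P2 := (a.1+b.1, a.2+b.2)
def pdet (r0 r1 r2 : ℕ → P2) : P2 :=
  padd (psub (pmul (r0 0) (psub (pmul (r1 1) (r2 2)) (pmul (r1 2) (r2 1))))
    (pmul (r0 1) (psub (pmul (r1 0) (r2 2)) (pmul (r1 2) (r2 0)))))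
    (pmul (r0 2) (psub (pmul (r1 0) (r2 1)) (pmul (r1 1) (r2 0))))

def wB (sa sb sc : Bool) : ℕ → ℕ → P2 :=
  fun i => fun t =>
  (match i with
  | 0 => [((0:ℤ),(0:ℤ)),(0,0),(1,0)]
  | 1 => [(1,0),(0,0),(0,0)]
  | 2 => [(0,0),(1,0),(0,0)]
  | 3 => [(1,0),(2,0),(1,0)]
  | 4 => [(2,0),(1,0),(1,0)]
  | 5 => [(2,0),(-4,0),(1,0)]
  | 6 => [(-4,0),(2,0),(1,0)]
  | 7 => [(5,0),(10,0),(-2,0)]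
  | 8 => [(2,0),(-4,0),(0,if sa then 1 else -1)]
  | 9 => [(0,if sa then 1 else -1),(-4,0),(1,0)]
  | 10 => [(1,0),(0,if sa then -2 else 2),(1,0)]
  | 11 => [(-4,0),(2,0),(0,if sb then 1 else -1)]
  | 12 => [(-4,0),(0,if sb then 1 else -1),(1,0)]
  | 13 => [(0,if sb then -2 else 2),(1,0),(1,0)]
  | 14 => [(5,0),(if sc then 5 else -5,0),(-2,0)]
  | 15 => [(if sc then 5 else -5,0),(5,0),(-1,0)]
  | _ => [(10,0),(5,0),(if sc then -2 else 2,0)]).getD t (0,0)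

def eB : ℕ → ℕ → P2 := fun r t => if r = t then (1,0) else (0,0)

def goodT : List (ℕ × ℕ × ℕ) :=
  [(0,3,7),(0,4,16),(0,5,8),(0,6,11),(0,9,10),(0,12,13),(0,14,15),
   (1,3,6),(1,4,13),(1,5,9),(1,7,15),(1,8,10),(1,11,12),(1,14,16),
   (2,3,10),(2,4,5),(2,6,12),(2,7,14),(2,8,9),(2,11,13),(2,15,16)]

def sort3 (i j k : ℕ) : ℕ × ℕ × ℕ :=
  (min i (min j k), i+j+k - min i (min j k) - max i (max j k), max i (max j k))

def goodB (i j k : ℕ) : Bool := goodT.contains (sort3 i j k)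

/-! ### The decidable facts -/

set_option maxRecDepth 100000 in
set_option synthInstance.maxHeartbeats 1000000 in
set_option synthInstance.maxSize 3000 in
set_option maxHeartbeats 2000000 in
lemma D1 : ∀ (sa sb sc : Bool) (i j k : Fin 17), ¬(i.val < j.val ∧ j.val < k.val) ∨
    (pdet (wB sa sb sc i.val) (wB sa sb sc j.val) (wB sa sb sc k.val) = ((0:ℤ),(0:ℤ)) ↔
      goodB i.val j.val k.val = true) := by decide

set_option maxRecDepth 100000 in
set_option synthInstance.maxHeartbeats 1000000 in
set_option synthInstance.maxSize 3000 in
set_option maxHeartbeats 2000000 in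
lemma D2 : ∀ (sa sb sc : Bool) (i j : Fin 17), ¬(i.val < j.val) ∨
    ¬(pdet (wB sa sb sc i.val) (wB sa sb sc j.val) (eB 0) = ((0:ℤ),(0:ℤ)) ∧
      pdet (wB sa sb sc i.val) (wB sa sb sc j.val) (eB 1) = ((0:ℤ),(0:ℤ)) ∧
      pdet (wB sa sb sc i.val) (wB sa sb sc j.val) (eB 2) = ((0:ℤ),(0:ℤ))) := by decide

set_option maxRecDepth 100000 in
set_option synthInstance.maxHeartbeats 1000000 in
set_option synthInstance.maxSize 3000 in
set_option maxHeartbeats 2000000 in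
lemma D4 : ∀ (i j k : Fin 17), ¬(i.val < j.val ∧ j.val < k.val) ∨
    ¬(goodB i.val j.val k.val = true) ∨
    ((i.val=0∧j.val=3∧k.val=7) ∨ (i.val=0∧j.val=4∧k.val=16) ∨ (i.val=0∧j.val=5∧k.val=8) ∨
     (i.val=0∧j.val=6∧k.val=11) ∨ (i.val=0∧j.val=9∧k.val=10) ∨ (i.val=0∧j.val=12∧k.val=13) ∨
     (i.val=0∧j.val=14∧k.val=15) ∨ (i.val=1∧j.val=3∧k.val=6) ∨ (i.val=1∧j.val=4∧k.val=13) ∨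
     (i.val=1∧j.val=5∧k.val=9) ∨ (i.val=1∧j.val=7∧k.val=15) ∨ (i.val=1∧j.val=8∧k.val=10) ∨
     (i.val=1∧j.val=11∧k.val=12) ∨ (i.val=1∧j.val=14∧k.val=16) ∨ (i.val=2∧j.val=3∧k.val=10) ∨
     (i.val=2∧j.val=4∧k.val=5) ∨ (i.val=2∧j.val=6∧k.val=12) ∨ (i.val=2∧j.val=7∧k.val=14) ∨
     (i.val=2∧j.val=8∧k.val=9) ∨ (i.val=2∧j.val=11∧k.val=13) ∨ (i.val=2∧j.val=15∧k.val=16)) := by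
  decide

def prB (x : ℕ) : ℕ × ℕ × ℕ → Bool := fun T => x == T.1 || x == T.2.1 || x == T.2.2

set_option maxRecDepth 100000 in
lemma D5 : ∀ x : Fin 17, x.val < 3 ∨ ((goodT.filter (prB x.val)).length ≤ 3) := by
  decide

set_option maxRecDepth 100000 in
lemma D0 : ∀ (sa sb sc : Bool) (i : Fin 17), ∃ t : Fin 3,
    wB sa sb sc i.val t.val ≠ ((0,0) : P2) := by decide

/-! ### From pairs to real numbers -/

noncomputable def toR2 (p : P2) : ℝ := (p.1 : ℝ) + (p.2 : ℝ) * Real.sqrt 2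

lemma sqrt2_sq : Real.sqrt 2 * Real.sqrt 2 = 2 := Real.mul_self_sqrt (by norm_num)

lemma toR2_mul (a b : P2) : toR2 (pmul a b) = toR2 a * toR2 b := by
  simp only [toR2, pmul]
  push_cast
  linear_combination (-(a.2:ℝ) * (b.2:ℝ)) * sqrt2_sq

lemma toR2_add (a b : P2) : toR2 (padd a b) = toR2 a + toR2 b := by
  simp only [toR2, padd]; push_cast; ring

lemma toR2_sub (a b : P2) : toR2 (psub a b) = toR2 a - toR2 b := by
  simp only [toR2, psub]; push_cast; ring

lemma toR2_eq_zero (p : P2) : toR2 p = 0 ↔ p = ((0,0) : P2) := by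
  constructor
  · intro h
    by_cases h2 : p.2 = 0
    · have h1 : (p.1 : ℝ) = 0 := by simpa [toR2, h2] using h
      have h1' : p.1 = 0 := by exact_mod_cast h1
      cases p
      simp_all
    · exfalso
      apply irrational_sqrt_two
      refine ⟨(-p.1/p.2 : ℚ), ?_⟩
      have hp2 : (p.2 : ℝ) ≠ 0 := Int.cast_ne_zero.mpr h2
      have h' : (p.1 : ℝ) + (p.2 : ℝ) * Real.sqrt 2 = 0 := h
      push_cast
      field_simp
      linarith
  · rintro rfl; simp [toR2]

/-! ### 3x3 determinants -/

def det3 {R : Type*} [CommRing R] (r0 r1 r2 : Fin 3 → R) : R :=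
  r0 0 * (r1 1 * r2 2 - r1 2 * r2 1) - r0 1 * (r1 0 * r2 2 - r1 2 * r2 0)
    + r0 2 * (r1 0 * r2 1 - r1 1 * r2 0)

lemma det3_eq {R : Type*} [CommRing R] (r0 r1 r2 : Fin 3 → R) :
    (Matrix.of ![r0, r1, r2]).det = det3 r0 r1 r2 := by
  rw [Matrix.det_fin_three]
  simp [det3, Matrix.of_apply]
  ring

lemma det3_toR2 (r0 r1 r2 : ℕ → P2) :
    det3 (fun t : Fin 3 => toR2 (r0 t.val)) (fun t : Fin 3 => toR2 (r1 t.val))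
      (fun t : Fin 3 => toR2 (r2 t.val)) = toR2 (pdet r0 r1 r2) := by
  simp only [det3, pdet, toR2_mul, toR2_add, toR2_sub]
  norm_num


open Matrix in
lemma coll_iff (a b c : Fin 3 → ℝ) (ha : a ≠ 0) (hb : b ≠ 0) (hc : c ≠ 0) :
    ProjCollinear {Projectivization.mk ℝ a ha, Projectivization.mk ℝ b hb,
      Projectivization.mk ℝ c hc} ↔ (Matrix.of ![a, b, c]).det = 0 := by
  have key : ∀ (f : (Fin 3 → ℝ) →ₗ[ℝ] ℝ) (v : Fin 3 → ℝ) (hv : v ≠ 0),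
      (f (Projectivization.mk ℝ v hv).rep = 0 ↔ f v = 0) := by
    intro f v hv
    obtain ⟨u, hu⟩ := Projectivization.exists_smul_eq_mk_rep ℝ v hv
    rw [← hu, Units.smul_def, _root_.map_smul, smul_eq_mul, mul_eq_zero]
    simp [u.ne_zero]
  have h1 : ProjCollinear {Projectivization.mk ℝ a ha, Projectivization.mk ℝ b hb,
      Projectivization.mk ℝ c hc} ↔
      ∃ f : (Fin 3 → ℝ) →ₗ[ℝ] ℝ, f ≠ 0 ∧ f a = 0 ∧ f b = 0 ∧ f c = 0 := by
    unfold ProjCollinear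
    constructor
    · rintro ⟨f, hf, hv⟩
      exact ⟨f, hf, (key f a ha).1 (hv _ (by simp)), (key f b hb).1 (hv _ (by simp)),
        (key f c hc).1 (hv _ (by simp))⟩
    · rintro ⟨f, hf, h1, h2, h3⟩
      refine ⟨f, hf, ?_⟩
      rintro p (rfl | rfl | rfl)
      · exact (key f a ha).2 h1
      · exact (key f b hb).2 h2
      · exact (key f c hc).2 h3
  have expand : ∀ (f : (Fin 3 → ℝ) →ₗ[ℝ] ℝ) (v : Fin 3 → ℝ),
      f v = v 0 * f (Pi.single 0 1) + v 1 * f (Pi.single 1 1) + v 2 * f (Pi.single 2 1) := by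
    intro f v
    have hv : v = v 0 • (Pi.single 0 1 : Fin 3 → ℝ) + v 1 • (Pi.single 1 1 : Fin 3 → ℝ)
        + v 2 • (Pi.single 2 1 : Fin 3 → ℝ) := by
      funext i; fin_cases i <;> simp
    rw [hv]
    simp [smul_eq_mul]; try ring
  rw [h1, ← Matrix.exists_mulVec_eq_zero_iff]
  constructor
  · rintro ⟨f, hf, h1, h2, h3⟩
    refine ⟨fun i => f (Pi.single i 1), fun h0 => hf ?_, ?_⟩
    · apply LinearMap.ext; intro v
      rw [expand f v, congrFun h0 0, congrFun h0 1, congrFun h0 2]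
      simp
    · funext j
      fin_cases j <;>
        simp [Matrix.mulVec, dotProduct, Fin.sum_univ_three] <;>
        [rw [← expand f a]; rw [← expand f b]; rw [← expand f c]] <;> assumption
  · rintro ⟨u, hu, hMu⟩
    refine ⟨u 0 • LinearMap.proj 0 + u 1 • LinearMap.proj 1 + u 2 • LinearMap.proj 2,
      ?_, ?_, ?_, ?_⟩
    · intro h0
      apply hu
      funext i
      have hi : (u 0 • LinearMap.proj 0 + u 1 • LinearMap.proj 1 + u 2 • LinearMap.proj 2 :
          (Fin 3 → ℝ) →ₗ[ℝ] ℝ) (Pi.single i 1) = 0 := by rw [h0]; simp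
      fin_cases i <;> simpa using hi
    all_goals {
      have h0 := congrFun hMu
      first
        | (have := h0 0; simp [Matrix.mulVec, dotProduct, Fin.sum_univ_three] at this ⊢;
            linarith)
        | (have := h0 1; simp [Matrix.mulVec, dotProduct, Fin.sum_univ_three] at this ⊢;
            linarith)
        | (have := h0 2; simp [Matrix.mulVec, dotProduct, Fin.sum_univ_three] at this ⊢;
            linarith) }


/-! ### The configuration points, via the integer data -/

def vR (sa sb sc : Bool) (i : Fin 17) : Fin 3 → ℝ := fun t => toR2 (wB sa sb sc i.val t.val)

lemma vR_ne (sa sb sc : Bool) (i : Fin 17) : vR sa sb sc i ≠ 0 := by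
  obtain ⟨t, ht⟩ := D0 sa sb sc i
  intro h
  exact ht ((toR2_eq_zero _).mp (congrFun h t))

def P (sa sb sc : Bool) (i : Fin 17) : ProjPlaneR :=
  Projectivization.mk ℝ (vR sa sb sc i) (vR_ne sa sb sc i)

lemma mk_congr {v w : Fin 3 → ℝ} (h : v ≠ 0) (h' : w ≠ 0) (e : v = w) :
    Projectivization.mk ℝ v h = Projectivization.mk ℝ w h' := by subst e; rfl

def Plist (α β γ : ℝ) : ℕ → ProjPlaneR := fun n =>
  match n with
  | 0 => V₁ | 1 => V₂ | 2 => V₃ | 3 => S₁ | 4 => S₂ | 5 => S₃ | 6 => S₄ | 7 => S₅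
  | 8 => S₆ α | 9 => S₇ α | 10 => S₈ α | 11 => S₉ β | 12 => S₁₀ β | 13 => S₁₁ β
  | 14 => S₁₂ γ | 15 => S₁₃ γ | _ => S₁₄ γ

section withSigns

variable {sa sb sc : Bool} {α β γ : ℝ}
  (ha : α = ((if sa then 1 else -1 : ℤ) : ℝ))
  (hb : β = ((if sb then 1 else -1 : ℤ) : ℝ))
  (hc : γ = ((if sc then 1 else -1 : ℤ) : ℝ))

include ha hb hc in
lemma hP : ∀ i : Fin 17, P sa sb sc i = Plist α β γ i.val := by
  intro i
  fin_cases i <;>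
  · apply mk_congr
    funext t
    fin_cases t <;>
      cases sa <;> cases sb <;> cases sc <;>
        norm_num [ha, hb, hc, vR, wB, toR2, Plist, V₁, V₂, V₃, S₁, S₂, S₃, S₄, S₅, S₆, S₇, S₈,
          S₉, S₁₀, S₁₁, S₁₂, S₁₃, S₁₄, mkP]


lemma Pinj (i j : Fin 17) (h : P sa sb sc i = P sa sb sc j) : i = j := by
  have main : ∀ i j : Fin 17, i.val < j.val → P sa sb sc i ≠ P sa sb sc j := by
    intro i j hij hPij
    obtain ⟨u, hu⟩ := (Projectivization.mk_eq_mk_iff ℝ _ _ (vR_ne sa sb sc i)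
      (vR_ne sa sb sc j)).mp hPij
    have hdet : ∀ r : ℕ, pdet (wB sa sb sc i.val) (wB sa sb sc j.val) (eB r) = ((0,0) : P2) := by
      intro r
      apply (toR2_eq_zero _).mp
      rw [← det3_toR2]
      have e1 : (fun t : Fin 3 => toR2 (wB sa sb sc i.val t.val)) = vR sa sb sc i := rfl
      have e2 : (fun t : Fin 3 => toR2 (wB sa sb sc j.val t.val)) = vR sa sb sc j := rfl
      rw [e1, e2, ← hu]
      simp only [det3, Pi.smul_apply, Units.smul_def, smul_eq_mul]
      ring
    rcases D2 sa sb sc i j with h' | h'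
    · exact h' hij
    · exact h' ⟨hdet 0, hdet 1, hdet 2⟩
  by_contra hne
  rcases Nat.lt_trichotomy i.val j.val with hlt | heq | hgt
  · exact main i j hlt h
  · exact hne (Fin.ext heq)
  · exact main j i hgt h.symm

lemma lemA_sorted (i j k : Fin 17) (hij : i.val < j.val) (hjk : j.val < k.val) :
    ProjCollinear {P sa sb sc i, P sa sb sc j, P sa sb sc k} ↔
      goodB i.val j.val k.val = true := by
  have h1 := coll_iff (vR sa sb sc i) (vR sa sb sc j) (vR sa sb sc k)
      (vR_ne _ _ _ _) (vR_ne _ _ _ _) (vR_ne _ _ _ _)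
  rw [det3_eq] at h1
  have h2 : det3 (vR sa sb sc i) (vR sa sb sc j) (vR sa sb sc k)
      = toR2 (pdet (wB sa sb sc i.val) (wB sa sb sc j.val) (wB sa sb sc k.val)) :=
    det3_toR2 _ _ _
  rw [h2, toR2_eq_zero] at h1
  rcases D1 sa sb sc i j k with h' | h'
  · exact absurd ⟨hij, hjk⟩ h'
  · exact h1.trans h'

lemma goodB_swap1 (a b c : ℕ) : goodB a b c = goodB b a c := by
  unfold goodB
  have : sort3 a b c = sort3 b a c := by
    simp only [sort3, Prod.mk.injEq]
    refine ⟨by omega, by omega, by omega⟩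
  rw [this]

lemma goodB_swap2 (a b c : ℕ) : goodB a b c = goodB a c b := by
  unfold goodB
  have : sort3 a b c = sort3 a c b := by
    simp only [sort3, Prod.mk.injEq]
    refine ⟨by omega, by omega, by omega⟩
  rw [this]

lemma set_swap1 (x y z : ProjPlaneR) : ({x, y, z} : Set ProjPlaneR) = {y, x, z} :=
  Set.insert_comm x y {z}

lemma set_swap2 (x y z : ProjPlaneR) : ({x, y, z} : Set ProjPlaneR) = {x, z, y} := by
  rw [Set.pair_comm y z]

lemma lemA (i j k : Fin 17) (hij : i ≠ j) (hik : i ≠ k) (hjk : j ≠ k) :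
    ProjCollinear {P sa sb sc i, P sa sb sc j, P sa sb sc k} ↔
      goodB i.val j.val k.val = true := by
  have nij : i.val ≠ j.val := fun h => hij (Fin.ext h)
  have nik : i.val ≠ k.val := fun h => hik (Fin.ext h)
  have njk : j.val ≠ k.val := fun h => hjk (Fin.ext h)
  rcases Nat.lt_trichotomy i.val j.val with h1 | h1 | h1
  · rcases Nat.lt_trichotomy j.val k.val with h2 | h2 | h2
    · exact lemA_sorted i j k h1 h2
    · exact absurd h2 njk
    · rcases Nat.lt_trichotomy i.val k.val with h3 | h3 | h3
      · rw [set_swap2, goodB_swap2]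
        exact lemA_sorted i k j h3 h2
      · exact absurd h3 nik
      · rw [show ({P sa sb sc i, P sa sb sc j, P sa sb sc k} : Set ProjPlaneR)
            = {P sa sb sc k, P sa sb sc i, P sa sb sc j} from by rw [set_swap2, set_swap1],
          show goodB i.val j.val k.val = goodB k.val i.val j.val from by
            rw [goodB_swap2, goodB_swap1]]
        exact lemA_sorted k i j h3 h1
  · exact absurd h1 nij
  · rcases Nat.lt_trichotomy j.val k.val with h2 | h2 | h2
    · rcases Nat.lt_trichotomy i.val k.val with h3 | h3 | h3
      · rw [set_swap1, goodB_swap1]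
        exact lemA_sorted j i k h1 h3
      · exact absurd h3 nik
      · rw [show ({P sa sb sc i, P sa sb sc j, P sa sb sc k} : Set ProjPlaneR)
            = {P sa sb sc j, P sa sb sc k, P sa sb sc i} from by rw [set_swap1, set_swap2],
          show goodB i.val j.val k.val = goodB j.val k.val i.val from by
            rw [goodB_swap1, goodB_swap2]]
        exact lemA_sorted j k i h2 h3
    · exact absurd h2 njk
    · rw [show ({P sa sb sc i, P sa sb sc j, P sa sb sc k} : Set ProjPlaneR)
          = {P sa sb sc k, P sa sb sc j, P sa sb sc i} from by
            rw [set_swap1, set_swap2, set_swap1],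
        show goodB i.val j.val k.val = goodB k.val j.val i.val from by
          rw [goodB_swap1, goodB_swap2, goodB_swap1]]
      exact lemA_sorted k j i h2 h1

def RHSp (α β γ : ℝ) (S : Set ProjPlaneR) : Prop :=
  S = {V₁, S₁, S₅} ∨ S = {V₁, S₂, S₁₄ γ} ∨ S = {V₁, S₃, S₆ α} ∨ S = {V₁, S₄, S₉ β} ∨ S = {V₁, S₇ α, S₈ α} ∨ S = {V₁, S₁₀ β, S₁₁ β} ∨ S = {V₁, S₁₂ γ, S₁₃ γ} ∨ S = {V₂, S₁, S₄} ∨ S = {V₂, S₂, S₁₁ β} ∨ S = {V₂, S₃, S₇ α} ∨ S = {V₂, S₅, S₁₃ γ} ∨ S = {V₂, S₆ α, S₈ α} ∨ S = {V₂, S₉ β, S₁₀ β} ∨ S = {V₂, S₁₂ γ, S₁₄ γ} ∨ S = {V₃, S₁, S₈ α} ∨ S = {V₃, S₂, S₃} ∨ S = {V₃, S₄, S₁₀ β} ∨ S = {V₃, S₅, S₁₂ γ} ∨ S = {V₃, S₆ α, S₇ α} ∨ S = {V₃, S₉ β, S₁₁ β} ∨ S = {V₃, S₁₃ γ, S₁₄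 γ}

include ha hb hc in
lemma idx_eq (i : Fin 17) (n : ℕ) (hn : n < 17) (e : P sa sb sc i = Plist α β γ n) :
    i.val = n := by
  have : i = ⟨n, hn⟩ := Pinj i ⟨n, hn⟩ (by rw [e]; exact (hP ha hb hc ⟨n, hn⟩).symm)
  rw [this]

include ha hb hc in
lemma idx_mem (i : Fin 17) (a b c : ℕ) (han : a < 17) (hbn : b < 17) (hcn : c < 17)
    (m : P sa sb sc i ∈ ({Plist α β γ a, Plist α β γ b, Plist α β γ c} : Set ProjPlaneR)) :
    i.val = a ∨ i.val = b ∨ i.val = c := by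
  simp only [Set.mem_insert_iff, Set.mem_singleton_iff] at m
  rcases m with e | e | e
  · exact Or.inl (idx_eq ha hb hc i a han e)
  · exact Or.inr (Or.inl (idx_eq ha hb hc i b hbn e))
  · exact Or.inr (Or.inr (idx_eq ha hb hc i c hcn e))


include ha hb hc in
lemma mainIff_sorted (i j k : Fin 17) (hij : i.val < j.val) (hjk : j.val < k.val) :
    ProjCollinear {P sa sb sc i, P sa sb sc j, P sa sb sc k} ↔
      RHSp α β γ {P sa sb sc i, P sa sb sc j, P sa sb sc k} := by
  rw [lemA_sorted i j k hij hjk]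
  constructor
  · intro hg
    rcases D4 i j k with h' | h' | h'
    · exact absurd ⟨hij, hjk⟩ h'
    · exact absurd hg h'
    · rcases h' with ⟨h1,h2,h3⟩|⟨h1,h2,h3⟩|⟨h1,h2,h3⟩|⟨h1,h2,h3⟩|⟨h1,h2,h3⟩|⟨h1,h2,h3⟩|⟨h1,h2,h3⟩|⟨h1,h2,h3⟩|⟨h1,h2,h3⟩|⟨h1,h2,h3⟩|⟨h1,h2,h3⟩|⟨h1,h2,h3⟩|⟨h1,h2,h3⟩|⟨h1,h2,h3⟩|⟨h1,h2,h3⟩|⟨h1,h2,h3⟩|⟨h1,h2,h3⟩|⟨h1,h2,h3⟩|⟨h1,h2,h3⟩|⟨h1,h2,h3⟩|⟨h1,h2,h3⟩ <;>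
      rw [hP ha hb hc i, hP ha hb hc j, hP ha hb hc k, h1, h2, h3]
      · exact Or.inl rfl
      · exact Or.inr (Or.inl rfl)
      · exact Or.inr (Or.inr (Or.inl rfl))
      · exact Or.inr (Or.inr (Or.inr (Or.inl rfl)))
      · exact Or.inr (Or.inr (Or.inr (Or.inr (Or.inl rfl))))
      · exact Or.inr (Or.inr (Or.inr (Or.inr (Or.inr (Or.inl rfl)))))
      · exact Or.inr (Or.inr (Or.inr (Or.inr (Or.inr (Or.inr (Or.inl rfl))))))
      · exact Or.inr (Or.inr (Or.inr (Or.inr (Or.inr (Or.inr (Or.inr (Or.inl rfl)))))))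
      · exact Or.inr (Or.inr (Or.inr (Or.inr (Or.inr (Or.inr (Or.inr (Or.inr (Or.inl rfl))))))))
      · exact Or.inr (Or.inr (Or.inr (Or.inr (Or.inr (Or.inr (Or.inr (Or.inr (Or.inr (Or.inl rfl)))))))))
      · exact Or.inr (Or.inr (Or.inr (Or.inr (Or.inr (Or.inr (Or.inr (Or.inr (Or.inr (Or.inr (Or.inl rfl))))))))))
      · exact Or.inr (Or.inr (Or.inr (Or.inr (Or.inr (Or.inr (Or.inr (Or.inr (Or.inr (Or.inr (Or.inr (Or.inl rfl)))))))))))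
      · exact Or.inr (Or.inr (Or.inr (Or.inr (Or.inr (Or.inr (Or.inr (Or.inr (Or.inr (Or.inr (Or.inr (Or.inr (Or.inl rfl))))))))))))
      · exact Or.inr (Or.inr (Or.inr (Or.inr (Or.inr (Or.inr (Or.inr (Or.inr (Or.inr (Or.inr (Or.inr (Or.inr (Or.inr (Or.inl rfl)))))))))))))
      · exact Or.inr (Or.inr (Or.inr (Or.inr (Or.inr (Or.inr (Or.inr (Or.inr (Or.inr (Or.inr (Or.inr (Or.inr (Or.inr (Or.inr (Or.inl rfl))))))))))))))
      · exact Or.inr (Or.inr (Or.inr (Or.inr (Or.inr (Or.inr (Or.inr (Or.inr (Or.inr (Or.inr (Or.inr (Or.inr (Or.inr (Or.inr (Or.inr (Or.inl rfl)))))))))))))))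
      · exact Or.inr (Or.inr (Or.inr (Or.inr (Or.inr (Or.inr (Or.inr (Or.inr (Or.inr (Or.inr (Or.inr (Or.inr (Or.inr (Or.inr (Or.inr (Or.inr (Or.inl rfl))))))))))))))))
      · exact Or.inr (Or.inr (Or.inr (Or.inr (Or.inr (Or.inr (Or.inr (Or.inr (Or.inr (Or.inr (Or.inr (Or.inr (Or.inr (Or.inr (Or.inr (Or.inr (Or.inr (Or.inl rfl)))))))))))))))))
      · exact Or.inr (Or.inr (Or.inr (Or.inr (Or.inr (Or.inr (Or.inr (Or.inr (Or.inr (Or.inr (Or.inr (Or.inr (Or.inr (Or.inr (Or.inr (Or.inr (Or.inr (Or.inr (Or.inl rfl))))))))))))))))))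
      · exact Or.inr (Or.inr (Or.inr (Or.inr (Or.inr (Or.inr (Or.inr (Or.inr (Or.inr (Or.inr (Or.inr (Or.inr (Or.inr (Or.inr (Or.inr (Or.inr (Or.inr (Or.inr (Or.inr (Or.inl rfl)))))))))))))))))))
      · exact Or.inr (Or.inr (Or.inr (Or.inr (Or.inr (Or.inr (Or.inr (Or.inr (Or.inr (Or.inr (Or.inr (Or.inr (Or.inr (Or.inr (Or.inr (Or.inr (Or.inr (Or.inr (Or.inr (Or.inr (rfl))))))))))))))))))))
  · intro hr
    rcases hr with h|h|h|h|h|h|h|h|h|h|h|h|h|h|h|h|h|h|h|h|h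
    · have h' : ({P sa sb sc i, P sa sb sc j, P sa sb sc k} : Set ProjPlaneR)
          = {Plist α β γ 0, Plist α β γ 3, Plist α β γ 7} := h
      have hi := idx_mem ha hb hc i 0 3 7 (by norm_num) (by norm_num) (by norm_num)
        (by rw [← h']; exact Set.mem_insert _ _)
      have hj := idx_mem ha hb hc j 0 3 7 (by norm_num) (by norm_num) (by norm_num)
        (by rw [← h']; exact Set.mem_insert_of_mem _ (Set.mem_insert _ _))
      have hk := idx_mem ha hb hc k 0 3 7 (by norm_num) (by norm_num) (by norm_num)
        (by rw [← h']; exact Set.mem_insert_of_mem _ (Set.mem_insert_of_mem _ rfl))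
      obtain ⟨e1, e2, e3⟩ : i.val = 0 ∧ j.val = 3 ∧ k.val = 7 := by omega
      rw [e1, e2, e3]; decide
    · have h' : ({P sa sb sc i, P sa sb sc j, P sa sb sc k} : Set ProjPlaneR)
          = {Plist α β γ 0, Plist α β γ 4, Plist α β γ 16} := h
      have hi := idx_mem ha hb hc i 0 4 16 (by norm_num) (by norm_num) (by norm_num)
        (by rw [← h']; exact Set.mem_insert _ _)
      have hj := idx_mem ha hb hc j 0 4 16 (by norm_num) (by norm_num) (by norm_num)
        (by rw [← h']; exact Set.mem_insert_of_mem _ (Set.mem_insert _ _))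
      have hk := idx_mem ha hb hc k 0 4 16 (by norm_num) (by norm_num) (by norm_num)
        (by rw [← h']; exact Set.mem_insert_of_mem _ (Set.mem_insert_of_mem _ rfl))
      obtain ⟨e1, e2, e3⟩ : i.val = 0 ∧ j.val = 4 ∧ k.val = 16 := by omega
      rw [e1, e2, e3]; decide
    · have h' : ({P sa sb sc i, P sa sb sc j, P sa sb sc k} : Set ProjPlaneR)
          = {Plist α β γ 0, Plist α β γ 5, Plist α β γ 8} := h
      have hi := idx_mem ha hb hc i 0 5 8 (by norm_num) (by norm_num) (by norm_num)
        (by rw [← h']; exact Set.mem_insert _ _)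
      have hj := idx_mem ha hb hc j 0 5 8 (by norm_num) (by norm_num) (by norm_num)
        (by rw [← h']; exact Set.mem_insert_of_mem _ (Set.mem_insert _ _))
      have hk := idx_mem ha hb hc k 0 5 8 (by norm_num) (by norm_num) (by norm_num)
        (by rw [← h']; exact Set.mem_insert_of_mem _ (Set.mem_insert_of_mem _ rfl))
      obtain ⟨e1, e2, e3⟩ : i.val = 0 ∧ j.val = 5 ∧ k.val = 8 := by omega
      rw [e1, e2, e3]; decide
    · have h' : ({P sa sb sc i, P sa sb sc j, P sa sb sc k} : Set ProjPlaneR)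
          = {Plist α β γ 0, Plist α β γ 6, Plist α β γ 11} := h
      have hi := idx_mem ha hb hc i 0 6 11 (by norm_num) (by norm_num) (by norm_num)
        (by rw [← h']; exact Set.mem_insert _ _)
      have hj := idx_mem ha hb hc j 0 6 11 (by norm_num) (by norm_num) (by norm_num)
        (by rw [← h']; exact Set.mem_insert_of_mem _ (Set.mem_insert _ _))
      have hk := idx_mem ha hb hc k 0 6 11 (by norm_num) (by norm_num) (by norm_num)
        (by rw [← h']; exact Set.mem_insert_of_mem _ (Set.mem_insert_of_mem _ rfl))
      obtain ⟨e1, e2, e3⟩ : i.val = 0 ∧ j.val = 6 ∧ k.val = 11 := by omega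
      rw [e1, e2, e3]; decide
    · have h' : ({P sa sb sc i, P sa sb sc j, P sa sb sc k} : Set ProjPlaneR)
          = {Plist α β γ 0, Plist α β γ 9, Plist α β γ 10} := h
      have hi := idx_mem ha hb hc i 0 9 10 (by norm_num) (by norm_num) (by norm_num)
        (by rw [← h']; exact Set.mem_insert _ _)
      have hj := idx_mem ha hb hc j 0 9 10 (by norm_num) (by norm_num) (by norm_num)
        (by rw [← h']; exact Set.mem_insert_of_mem _ (Set.mem_insert _ _))
      have hk := idx_mem ha hb hc k 0 9 10 (by norm_num) (by norm_num) (by norm_num)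
        (by rw [← h']; exact Set.mem_insert_of_mem _ (Set.mem_insert_of_mem _ rfl))
      obtain ⟨e1, e2, e3⟩ : i.val = 0 ∧ j.val = 9 ∧ k.val = 10 := by omega
      rw [e1, e2, e3]; decide
    · have h' : ({P sa sb sc i, P sa sb sc j, P sa sb sc k} : Set ProjPlaneR)
          = {Plist α β γ 0, Plist α β γ 12, Plist α β γ 13} := h
      have hi := idx_mem ha hb hc i 0 12 13 (by norm_num) (by norm_num) (by norm_num)
        (by rw [← h']; exact Set.mem_insert _ _)
      have hj := idx_mem ha hb hc j 0 12 13 (by norm_num) (by norm_num) (by norm_num)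
        (by rw [← h']; exact Set.mem_insert_of_mem _ (Set.mem_insert _ _))
      have hk := idx_mem ha hb hc k 0 12 13 (by norm_num) (by norm_num) (by norm_num)
        (by rw [← h']; exact Set.mem_insert_of_mem _ (Set.mem_insert_of_mem _ rfl))
      obtain ⟨e1, e2, e3⟩ : i.val = 0 ∧ j.val = 12 ∧ k.val = 13 := by omega
      rw [e1, e2, e3]; decide
    · have h' : ({P sa sb sc i, P sa sb sc j, P sa sb sc k} : Set ProjPlaneR)
          = {Plist α β γ 0, Plist α β γ 14, Plist α β γ 15} := h
      have hi := idx_mem ha hb hc i 0 14 15 (by norm_num) (by norm_num) (by norm_num)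
        (by rw [← h']; exact Set.mem_insert _ _)
      have hj := idx_mem ha hb hc j 0 14 15 (by norm_num) (by norm_num) (by norm_num)
        (by rw [← h']; exact Set.mem_insert_of_mem _ (Set.mem_insert _ _))
      have hk := idx_mem ha hb hc k 0 14 15 (by norm_num) (by norm_num) (by norm_num)
        (by rw [← h']; exact Set.mem_insert_of_mem _ (Set.mem_insert_of_mem _ rfl))
      obtain ⟨e1, e2, e3⟩ : i.val = 0 ∧ j.val = 14 ∧ k.val = 15 := by omega
      rw [e1, e2, e3]; decide
    · have h' : ({P sa sb sc i, P sa sb sc j, P sa sb sc k} : Set ProjPlaneR)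
          = {Plist α β γ 1, Plist α β γ 3, Plist α β γ 6} := h
      have hi := idx_mem ha hb hc i 1 3 6 (by norm_num) (by norm_num) (by norm_num)
        (by rw [← h']; exact Set.mem_insert _ _)
      have hj := idx_mem ha hb hc j 1 3 6 (by norm_num) (by norm_num) (by norm_num)
        (by rw [← h']; exact Set.mem_insert_of_mem _ (Set.mem_insert _ _))
      have hk := idx_mem ha hb hc k 1 3 6 (by norm_num) (by norm_num) (by norm_num)
        (by rw [← h']; exact Set.mem_insert_of_mem _ (Set.mem_insert_of_mem _ rfl))
      obtain ⟨e1, e2, e3⟩ : i.val = 1 ∧ j.val = 3 ∧ k.val = 6 := by omega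
      rw [e1, e2, e3]; decide
    · have h' : ({P sa sb sc i, P sa sb sc j, P sa sb sc k} : Set ProjPlaneR)
          = {Plist α β γ 1, Plist α β γ 4, Plist α β γ 13} := h
      have hi := idx_mem ha hb hc i 1 4 13 (by norm_num) (by norm_num) (by norm_num)
        (by rw [← h']; exact Set.mem_insert _ _)
      have hj := idx_mem ha hb hc j 1 4 13 (by norm_num) (by norm_num) (by norm_num)
        (by rw [← h']; exact Set.mem_insert_of_mem _ (Set.mem_insert _ _))
      have hk := idx_mem ha hb hc k 1 4 13 (by norm_num) (by norm_num) (by norm_num)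
        (by rw [← h']; exact Set.mem_insert_of_mem _ (Set.mem_insert_of_mem _ rfl))
      obtain ⟨e1, e2, e3⟩ : i.val = 1 ∧ j.val = 4 ∧ k.val = 13 := by omega
      rw [e1, e2, e3]; decide
    · have h' : ({P sa sb sc i, P sa sb sc j, P sa sb sc k} : Set ProjPlaneR)
          = {Plist α β γ 1, Plist α β γ 5, Plist α β γ 9} := h
      have hi := idx_mem ha hb hc i 1 5 9 (by norm_num) (by norm_num) (by norm_num)
        (by rw [← h']; exact Set.mem_insert _ _)
      have hj := idx_mem ha hb hc j 1 5 9 (by norm_num) (by norm_num) (by norm_num)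
        (by rw [← h']; exact Set.mem_insert_of_mem _ (Set.mem_insert _ _))
      have hk := idx_mem ha hb hc k 1 5 9 (by norm_num) (by norm_num) (by norm_num)
        (by rw [← h']; exact Set.mem_insert_of_mem _ (Set.mem_insert_of_mem _ rfl))
      obtain ⟨e1, e2, e3⟩ : i.val = 1 ∧ j.val = 5 ∧ k.val = 9 := by omega
      rw [e1, e2, e3]; decide
    · have h' : ({P sa sb sc i, P sa sb sc j, P sa sb sc k} : Set ProjPlaneR)
          = {Plist α β γ 1, Plist α β γ 7, Plist α β γ 15} := h
      have hi := idx_mem ha hb hc i 1 7 15 (by norm_num) (by norm_num) (by norm_num)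
        (by rw [← h']; exact Set.mem_insert _ _)
      have hj := idx_mem ha hb hc j 1 7 15 (by norm_num) (by norm_num) (by norm_num)
        (by rw [← h']; exact Set.mem_insert_of_mem _ (Set.mem_insert _ _))
      have hk := idx_mem ha hb hc k 1 7 15 (by norm_num) (by norm_num) (by norm_num)
        (by rw [← h']; exact Set.mem_insert_of_mem _ (Set.mem_insert_of_mem _ rfl))
      obtain ⟨e1, e2, e3⟩ : i.val = 1 ∧ j.val = 7 ∧ k.val = 15 := by omega
      rw [e1, e2, e3]; decide
    · have h' : ({P sa sb sc i, P sa sb sc j, P sa sb sc k} : Set ProjPlaneR)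
          = {Plist α β γ 1, Plist α β γ 8, Plist α β γ 10} := h
      have hi := idx_mem ha hb hc i 1 8 10 (by norm_num) (by norm_num) (by norm_num)
        (by rw [← h']; exact Set.mem_insert _ _)
      have hj := idx_mem ha hb hc j 1 8 10 (by norm_num) (by norm_num) (by norm_num)
        (by rw [← h']; exact Set.mem_insert_of_mem _ (Set.mem_insert _ _))
      have hk := idx_mem ha hb hc k 1 8 10 (by norm_num) (by norm_num) (by norm_num)
        (by rw [← h']; exact Set.mem_insert_of_mem _ (Set.mem_insert_of_mem _ rfl))
      obtain ⟨e1, e2, e3⟩ : i.val = 1 ∧ j.val = 8 ∧ k.val = 10 := by omega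
      rw [e1, e2, e3]; decide
    · have h' : ({P sa sb sc i, P sa sb sc j, P sa sb sc k} : Set ProjPlaneR)
          = {Plist α β γ 1, Plist α β γ 11, Plist α β γ 12} := h
      have hi := idx_mem ha hb hc i 1 11 12 (by norm_num) (by norm_num) (by norm_num)
        (by rw [← h']; exact Set.mem_insert _ _)
      have hj := idx_mem ha hb hc j 1 11 12 (by norm_num) (by norm_num) (by norm_num)
        (by rw [← h']; exact Set.mem_insert_of_mem _ (Set.mem_insert _ _))
      have hk := idx_mem ha hb hc k 1 11 12 (by norm_num) (by norm_num) (by norm_num)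
        (by rw [← h']; exact Set.mem_insert_of_mem _ (Set.mem_insert_of_mem _ rfl))
      obtain ⟨e1, e2, e3⟩ : i.val = 1 ∧ j.val = 11 ∧ k.val = 12 := by omega
      rw [e1, e2, e3]; decide
    · have h' : ({P sa sb sc i, P sa sb sc j, P sa sb sc k} : Set ProjPlaneR)
          = {Plist α β γ 1, Plist α β γ 14, Plist α β γ 16} := h
      have hi := idx_mem ha hb hc i 1 14 16 (by norm_num) (by norm_num) (by norm_num)
        (by rw [← h']; exact Set.mem_insert _ _)
      have hj := idx_mem ha hb hc j 1 14 16 (by norm_num) (by norm_num) (by norm_num)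
        (by rw [← h']; exact Set.mem_insert_of_mem _ (Set.mem_insert _ _))
      have hk := idx_mem ha hb hc k 1 14 16 (by norm_num) (by norm_num) (by norm_num)
        (by rw [← h']; exact Set.mem_insert_of_mem _ (Set.mem_insert_of_mem _ rfl))
      obtain ⟨e1, e2, e3⟩ : i.val = 1 ∧ j.val = 14 ∧ k.val = 16 := by omega
      rw [e1, e2, e3]; decide
    · have h' : ({P sa sb sc i, P sa sb sc j, P sa sb sc k} : Set ProjPlaneR)
          = {Plist α β γ 2, Plist α β γ 3, Plist α β γ 10} := h
      have hi := idx_mem ha hb hc i 2 3 10 (by norm_num) (by norm_num) (by norm_num)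
        (by rw [← h']; exact Set.mem_insert _ _)
      have hj := idx_mem ha hb hc j 2 3 10 (by norm_num) (by norm_num) (by norm_num)
        (by rw [← h']; exact Set.mem_insert_of_mem _ (Set.mem_insert _ _))
      have hk := idx_mem ha hb hc k 2 3 10 (by norm_num) (by norm_num) (by norm_num)
        (by rw [← h']; exact Set.mem_insert_of_mem _ (Set.mem_insert_of_mem _ rfl))
      obtain ⟨e1, e2, e3⟩ : i.val = 2 ∧ j.val = 3 ∧ k.val = 10 := by omega
      rw [e1, e2, e3]; decide
    · have h' : ({P sa sb sc i, P sa sb sc j, P sa sb sc k} : Set ProjPlaneR)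
          = {Plist α β γ 2, Plist α β γ 4, Plist α β γ 5} := h
      have hi := idx_mem ha hb hc i 2 4 5 (by norm_num) (by norm_num) (by norm_num)
        (by rw [← h']; exact Set.mem_insert _ _)
      have hj := idx_mem ha hb hc j 2 4 5 (by norm_num) (by norm_num) (by norm_num)
        (by rw [← h']; exact Set.mem_insert_of_mem _ (Set.mem_insert _ _))
      have hk := idx_mem ha hb hc k 2 4 5 (by norm_num) (by norm_num) (by norm_num)
        (by rw [← h']; exact Set.mem_insert_of_mem _ (Set.mem_insert_of_mem _ rfl))
      obtain ⟨e1, e2, e3⟩ : i.val = 2 ∧ j.val = 4 ∧ k.val = 5 := by omega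
      rw [e1, e2, e3]; decide
    · have h' : ({P sa sb sc i, P sa sb sc j, P sa sb sc k} : Set ProjPlaneR)
          = {Plist α β γ 2, Plist α β γ 6, Plist α β γ 12} := h
      have hi := idx_mem ha hb hc i 2 6 12 (by norm_num) (by norm_num) (by norm_num)
        (by rw [← h']; exact Set.mem_insert _ _)
      have hj := idx_mem ha hb hc j 2 6 12 (by norm_num) (by norm_num) (by norm_num)
        (by rw [← h']; exact Set.mem_insert_of_mem _ (Set.mem_insert _ _))
      have hk := idx_mem ha hb hc k 2 6 12 (by norm_num) (by norm_num) (by norm_num)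
        (by rw [← h']; exact Set.mem_insert_of_mem _ (Set.mem_insert_of_mem _ rfl))
      obtain ⟨e1, e2, e3⟩ : i.val = 2 ∧ j.val = 6 ∧ k.val = 12 := by omega
      rw [e1, e2, e3]; decide
    · have h' : ({P sa sb sc i, P sa sb sc j, P sa sb sc k} : Set ProjPlaneR)
          = {Plist α β γ 2, Plist α β γ 7, Plist α β γ 14} := h
      have hi := idx_mem ha hb hc i 2 7 14 (by norm_num) (by norm_num) (by norm_num)
        (by rw [← h']; exact Set.mem_insert _ _)
      have hj := idx_mem ha hb hc j 2 7 14 (by norm_num) (by norm_num) (by norm_num)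
        (by rw [← h']; exact Set.mem_insert_of_mem _ (Set.mem_insert _ _))
      have hk := idx_mem ha hb hc k 2 7 14 (by norm_num) (by norm_num) (by norm_num)
        (by rw [← h']; exact Set.mem_insert_of_mem _ (Set.mem_insert_of_mem _ rfl))
      obtain ⟨e1, e2, e3⟩ : i.val = 2 ∧ j.val = 7 ∧ k.val = 14 := by omega
      rw [e1, e2, e3]; decide
    · have h' : ({P sa sb sc i, P sa sb sc j, P sa sb sc k} : Set ProjPlaneR)
          = {Plist α β γ 2, Plist α β γ 8, Plist α β γ 9} := h
      have hi := idx_mem ha hb hc i 2 8 9 (by norm_num) (by norm_num) (by norm_num)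
        (by rw [← h']; exact Set.mem_insert _ _)
      have hj := idx_mem ha hb hc j 2 8 9 (by norm_num) (by norm_num) (by norm_num)
        (by rw [← h']; exact Set.mem_insert_of_mem _ (Set.mem_insert _ _))
      have hk := idx_mem ha hb hc k 2 8 9 (by norm_num) (by norm_num) (by norm_num)
        (by rw [← h']; exact Set.mem_insert_of_mem _ (Set.mem_insert_of_mem _ rfl))
      obtain ⟨e1, e2, e3⟩ : i.val = 2 ∧ j.val = 8 ∧ k.val = 9 := by omega
      rw [e1, e2, e3]; decide
    · have h' : ({P sa sb sc i, P sa sb sc j, P sa sb sc k} : Set ProjPlaneR)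
          = {Plist α β γ 2, Plist α β γ 11, Plist α β γ 13} := h
      have hi := idx_mem ha hb hc i 2 11 13 (by norm_num) (by norm_num) (by norm_num)
        (by rw [← h']; exact Set.mem_insert _ _)
      have hj := idx_mem ha hb hc j 2 11 13 (by norm_num) (by norm_num) (by norm_num)
        (by rw [← h']; exact Set.mem_insert_of_mem _ (Set.mem_insert _ _))
      have hk := idx_mem ha hb hc k 2 11 13 (by norm_num) (by norm_num) (by norm_num)
        (by rw [← h']; exact Set.mem_insert_of_mem _ (Set.mem_insert_of_mem _ rfl))
      obtain ⟨e1, e2, e3⟩ : i.val = 2 ∧ j.val = 11 ∧ k.val = 13 := by omega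
      rw [e1, e2, e3]; decide
    · have h' : ({P sa sb sc i, P sa sb sc j, P sa sb sc k} : Set ProjPlaneR)
          = {Plist α β γ 2, Plist α β γ 15, Plist α β γ 16} := h
      have hi := idx_mem ha hb hc i 2 15 16 (by norm_num) (by norm_num) (by norm_num)
        (by rw [← h']; exact Set.mem_insert _ _)
      have hj := idx_mem ha hb hc j 2 15 16 (by norm_num) (by norm_num) (by norm_num)
        (by rw [← h']; exact Set.mem_insert_of_mem _ (Set.mem_insert _ _))
      have hk := idx_mem ha hb hc k 2 15 16 (by norm_num) (by norm_num) (by norm_num)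
        (by rw [← h']; exact Set.mem_insert_of_mem _ (Set.mem_insert_of_mem _ rfl))
      obtain ⟨e1, e2, e3⟩ : i.val = 2 ∧ j.val = 15 ∧ k.val = 16 := by omega
      rw [e1, e2, e3]; decide

include ha hb hc in
lemma mainIff (i j k : Fin 17) (hij : i ≠ j) (hik : i ≠ k) (hjk : j ≠ k) :
    ProjCollinear {P sa sb sc i, P sa sb sc j, P sa sb sc k} ↔
      RHSp α β γ {P sa sb sc i, P sa sb sc j, P sa sb sc k} := by
  have nij : i.val ≠ j.val := fun h => hij (Fin.ext h)
  have nik : i.val ≠ k.val := fun h => hik (Fin.ext h)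
  have njk : j.val ≠ k.val := fun h => hjk (Fin.ext h)
  rcases Nat.lt_trichotomy i.val j.val with h1 | h1 | h1
  · rcases Nat.lt_trichotomy j.val k.val with h2 | h2 | h2
    · exact mainIff_sorted ha hb hc i j k h1 h2
    · exact absurd h2 njk
    · rcases Nat.lt_trichotomy i.val k.val with h3 | h3 | h3
      · rw [set_swap2]
        exact mainIff_sorted ha hb hc i k j h3 h2
      · exact absurd h3 nik
      · rw [show ({P sa sb sc i, P sa sb sc j, P sa sb sc k} : Set ProjPlaneR)
            = {P sa sb sc k, P sa sb sc i, P sa sb sc j} from by rw [set_swap2, set_swap1]]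
        exact mainIff_sorted ha hb hc k i j h3 h1
  · exact absurd h1 nij
  · rcases Nat.lt_trichotomy j.val k.val with h2 | h2 | h2
    · rcases Nat.lt_trichotomy i.val k.val with h3 | h3 | h3
      · rw [set_swap1]
        exact mainIff_sorted ha hb hc j i k h1 h3
      · exact absurd h3 nik
      · rw [show ({P sa sb sc i, P sa sb sc j, P sa sb sc k} : Set ProjPlaneR)
            = {P sa sb sc j, P sa sb sc k, P sa sb sc i} from by rw [set_swap1, set_swap2]]
        exact mainIff_sorted ha hb hc j k i h2 h3
    · exact absurd h2 njk
    · rw [show ({P sa sb sc i, P sa sb sc j, P sa sb sc k} : Set ProjPlaneR)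
          = {P sa sb sc k, P sa sb sc j, P sa sb sc i} from by
            rw [set_swap1, set_swap2, set_swap1]]
      exact mainIff_sorted ha hb hc k j i h2 h1


include ha hb hc in
lemma memE : ∀ p ∈ Econf α β γ, ∃ i : Fin 17, p = P sa sb sc i := by
  intro p hp
  simp only [Econf, Set.mem_insert_iff, Set.mem_singleton_iff] at hp
  rcases hp with rfl|rfl|rfl|rfl|rfl|rfl|rfl|rfl|rfl|rfl|rfl|rfl|rfl|rfl|rfl|rfl|rfl
  · exact ⟨0, (hP ha hb hc 0).symm⟩
  · exact ⟨1, (hP ha hb hc 1).symm⟩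
  · exact ⟨2, (hP ha hb hc 2).symm⟩
  · exact ⟨3, (hP ha hb hc 3).symm⟩
  · exact ⟨4, (hP ha hb hc 4).symm⟩
  · exact ⟨5, (hP ha hb hc 5).symm⟩
  · exact ⟨6, (hP ha hb hc 6).symm⟩
  · exact ⟨7, (hP ha hb hc 7).symm⟩
  · exact ⟨8, (hP ha hb hc 8).symm⟩
  · exact ⟨9, (hP ha hb hc 9).symm⟩
  · exact ⟨10, (hP ha hb hc 10).symm⟩
  · exact ⟨11, (hP ha hb hc 11).symm⟩
  · exact ⟨12, (hP ha hb hc 12).symm⟩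
  · exact ⟨13, (hP ha hb hc 13).symm⟩
  · exact ⟨14, (hP ha hb hc 14).symm⟩
  · exact ⟨15, (hP ha hb hc 15).symm⟩
  · exact ⟨16, (hP ha hb hc 16).symm⟩

include ha hb hc in
lemma memP (i : Fin 17) : P sa sb sc i ∈ Econf α β γ := by
  rw [hP ha hb hc i]
  fin_cases i <;> simp [Plist, Econf]



lemma triple_eq {X : Type*} {A B C x y z : X} (hAB : A ≠ B) (hAC : A ≠ C) (hBC : B ≠ C)
    (hxy : x ≠ y) (hxz : x ≠ z) (hyz : y ≠ z)
    (hx : x = A ∨ x = B ∨ x = C) (hy : y = A ∨ y = B ∨ y = C) (hz : z = A ∨ z = B ∨ z = C) :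
    ({x, y, z} : Set X) = {A, B, C} := by
  rcases hx with rfl|rfl|rfl <;> rcases hy with rfl|rfl|rfl <;> rcases hz with rfl|rfl|rfl <;>
    first
      | (exact absurd rfl hxy)
      | (exact absurd rfl hxz)
      | (exact absurd rfl hyz)
      | rfl
      | (ext t; simp only [Set.mem_insert_iff, Set.mem_singleton_iff]; tauto)

lemma count3 (x a1 b1 a2 b2 a3 b3 a4 b4 : Fin 17)
    (m1 : a1 ≠ x) (m2 : a2 ≠ x) (m3 : a3 ≠ x)
    (c12a : a1 ≠ a2) (c12b : a1 ≠ b2) (c13a : a1 ≠ a3) (c13b : a1 ≠ b3)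
    (c14a : a1 ≠ a4) (c14b : a1 ≠ b4) (c23a : a2 ≠ a3) (c23b : a2 ≠ b3)
    (c24a : a2 ≠ a4) (c24b : a2 ≠ b4) (c34a : a3 ≠ a4) (c34b : a3 ≠ b4)
    (h1 : goodB x.val a1.val b1.val = true) (h2 : goodB x.val a2.val b2.val = true)
    (h3 : goodB x.val a3.val b3.val = true) (h4 : goodB x.val a4.val b4.val = true) :
    x.val < 3 := by
  rcases D5 x with h | h
  · exact h
  exfalso
  have hmemf : ∀ (u v : Fin 17), goodB x.val u.val v.val = true →
      sort3 x.val u.val v.val ∈ goodT.filter (prB x.val) := by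
    intro u v hg
    unfold goodB at hg
    apply List.mem_filter.mpr
    refine ⟨List.elem_iff.mp hg, ?_⟩
    have hx : x.val = (sort3 x.val u.val v.val).1 ∨ x.val = (sort3 x.val u.val v.val).2.1 ∨
        x.val = (sort3 x.val u.val v.val).2.2 := by
      simp only [sort3]
      omega
    simp only [prB, Bool.or_eq_true, beq_iff_eq]
    tauto
  have hT1 := hmemf a1 b1 h1
  have hT2 := hmemf a2 b2 h2
  have hT3 := hmemf a3 b3 h3
  have hT4 := hmemf a4 b4 h4
  have key : ∀ (u v u' v' : Fin 17), u ≠ u' → u ≠ v' → u ≠ x →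
      sort3 x.val u.val v.val ≠ sort3 x.val u'.val v'.val := by
    intro u v u' v' n1 n2 n3 e
    have hor : u.val = x.val ∨ u.val = u'.val ∨ u.val = v'.val := by
      simp only [sort3, Prod.mk.injEq] at e
      omega
    rcases hor with e'|e'|e'
    exacts [n3 (Fin.ext e'), n1 (Fin.ext e'), n2 (Fin.ext e')]
  have d12 := key a1 b1 a2 b2 c12a c12b m1
  have d13 := key a1 b1 a3 b3 c13a c13b m1
  have d14 := key a1 b1 a4 b4 c14a c14b m1
  have d23 := key a2 b2 a3 b3 c23a c23b m2
  have d24 := key a2 b2 a4 b4 c24a c24b m2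
  have d34 := key a3 b3 a4 b4 c34a c34b m3
  have hsub : ({sort3 x.val a1.val b1.val, sort3 x.val a2.val b2.val,
      sort3 x.val a3.val b3.val, sort3 x.val a4.val b4.val} : Finset (ℕ×ℕ×ℕ))
      ⊆ (goodT.filter (prB x.val)).toFinset := by
    intro t ht
    simp only [Finset.mem_insert, Finset.mem_singleton] at ht
    rcases ht with rfl|rfl|rfl|rfl
    exacts [List.mem_toFinset.mpr hT1, List.mem_toFinset.mpr hT2,
      List.mem_toFinset.mpr hT3, List.mem_toFinset.mpr hT4]
  have hcard : ({sort3 x.val a1.val b1.val, sort3 x.val a2.val b2.val,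
      sort3 x.val a3.val b3.val, sort3 x.val a4.val b4.val} : Finset (ℕ×ℕ×ℕ)).card = 4 := by
    rw [Finset.card_insert_of_notMem (by simp [d12, d13, d14]),
      Finset.card_insert_of_notMem (by simp [d23, d24]),
      Finset.card_insert_of_notMem (by simp [d34]), Finset.card_singleton]
  have h4le : 4 ≤ (goodT.filter (prB x.val)).toFinset.card := by
    rw [← hcard]
    exact Finset.card_le_card hsub
  have h5 := List.toFinset_card_le (goodT.filter (prB x.val))
  omega

include ha hb hc in
theorem main :

    (∀ p q r : ProjPlaneR, p ∈ Econf α β γ → q ∈ Econf α β γ → r ∈ Econf α β γ →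
      p ≠ q → p ≠ r → q ≠ r →
      (ProjCollinear {p, q, r} ↔
        (({p, q, r} : Set ProjPlaneR) = {V₁, S₁, S₅} ∨
         ({p, q, r} : Set ProjPlaneR) = {V₁, S₂, S₁₄ γ} ∨
         ({p, q, r} : Set ProjPlaneR) = {V₁, S₃, S₆ α} ∨
         ({p, q, r} : Set ProjPlaneR) = {V₁, S₄, S₉ β} ∨
         ({p, q, r} : Set ProjPlaneR) = {V₁, S₇ α, S₈ α} ∨
         ({p, q, r} : Set ProjPlaneR) = {V₁, S₁₀ β, S₁₁ β} ∨
         ({p, q, r} : Set ProjPlaneR) = {V₁, S₁₂ γ, S₁₃ γ} ∨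
         ({p, q, r} : Set ProjPlaneR) = {V₂, S₁, S₄} ∨
         ({p, q, r} : Set ProjPlaneR) = {V₂, S₂, S₁₁ β} ∨
         ({p, q, r} : Set ProjPlaneR) = {V₂, S₃, S₇ α} ∨
         ({p, q, r} : Set ProjPlaneR) = {V₂, S₅, S₁₃ γ} ∨
         ({p, q, r} : Set ProjPlaneR) = {V₂, S₆ α, S₈ α} ∨
         ({p, q, r} : Set ProjPlaneR) = {V₂, S₉ β, S₁₀ β} ∨
         ({p, q, r} : Set ProjPlaneR) = {V₂, S₁₂ γ, S₁₄ γ} ∨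
         ({p, q, r} : Set ProjPlaneR) = {V₃, S₁, S₈ α} ∨
         ({p, q, r} : Set ProjPlaneR) = {V₃, S₂, S₃} ∨
         ({p, q, r} : Set ProjPlaneR) = {V₃, S₄, S₁₀ β} ∨
         ({p, q, r} : Set ProjPlaneR) = {V₃, S₅, S₁₂ γ} ∨
         ({p, q, r} : Set ProjPlaneR) = {V₃, S₆ α, S₇ α} ∨
         ({p, q, r} : Set ProjPlaneR) = {V₃, S₉ β, S₁₁ β} ∨
         ({p, q, r} : Set ProjPlaneR) = {V₃, S₁₃ γ, S₁₄ γ}))) ∧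
    (∀ f : ProjPlaneR → ProjPlaneR,
      Set.BijOn f (Econf α β γ) (Econf α β γ) →
      (∀ p ∈ Econf α β γ, ∀ q ∈ Econf α β γ, ∀ r ∈ Econf α β γ,
        (ProjCollinear {p, q, r} ↔ ProjCollinear {f p, f q, f r})) →
      f '' ({V₁, V₂, V₃} : Set ProjPlaneR) = {V₁, V₂, V₃}) := by
  constructor
  · intro p q r hp hq hr hpq hpr hqr
    obtain ⟨i, rfl⟩ := memE ha hb hc p hp
    obtain ⟨j, rfl⟩ := memE ha hb hc q hq
    obtain ⟨k, rfl⟩ := memE ha hb hc r hr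
    exact mainIff ha hb hc i j k (fun e => hpq (by rw [e])) (fun e => hpr (by rw [e]))
      (fun e => hqr (by rw [e]))
  · intro f hbij hpres
    have hFex : ∀ i : Fin 17, ∃ j : Fin 17, f (P sa sb sc i) = P sa sb sc j :=
      fun i => memE ha hb hc _ (hbij.mapsTo (memP ha hb hc i))
    choose F hF using hFex
    have Finj : ∀ i j : Fin 17, F i = F j → i = j := by
      intro i j e
      apply Pinj
      apply hbij.injOn (memP ha hb hc i) (memP ha hb hc j)
      rw [hF i, hF j, e]
    have FneOf : ∀ i j : Fin 17, i ≠ j → F i ≠ F j := fun i j h e => h (Finj i j e)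
    have hline : ∀ i j k : Fin 17, i ≠ j → i ≠ k → j ≠ k →
        goodB i.val j.val k.val = true → goodB (F i).val (F j).val (F k).val = true := by
      intro i j k hij hik hjk hg
      have h1 : ProjCollinear {P sa sb sc i, P sa sb sc j, P sa sb sc k} :=
        (lemA i j k hij hik hjk).mpr hg
      have h2 := (hpres _ (memP ha hb hc i) _ (memP ha hb hc j) _ (memP ha hb hc k)).mp h1
      rw [hF i, hF j, hF k] at h2
      exact (lemA (F i) (F j) (F k) (FneOf _ _ hij) (FneOf _ _ hik) (FneOf _ _ hjk)).mp h2
    have hV1 : (F 0).val < 3 := count3 (F 0) (F 3) (F 7) (F 4) (F 16) (F 5) (F 8) (F 6) (F 11)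
      (FneOf 3 0 (by decide)) (FneOf 4 0 (by decide)) (FneOf 5 0 (by decide))
      (FneOf 3 4 (by decide)) (FneOf 3 16 (by decide)) (FneOf 3 5 (by decide)) (FneOf 3 8 (by decide)) (FneOf 3 6 (by decide)) (FneOf 3 11 (by decide))
      (FneOf 4 5 (by decide)) (FneOf 4 8 (by decide)) (FneOf 4 6 (by decide)) (FneOf 4 11 (by decide)) (FneOf 5 6 (by decide)) (FneOf 5 11 (by decide))
      (hline 0 3 7 (by decide) (by decide) (by decide) (by decide)) (hline 0 4 16 (by decide) (by decide) (by decide) (by decide)) (hline 0 5 8 (by decide) (by decide) (by decide) (by decide)) (hline 0 6 11 (by decide) (by decide) (by decide) (by decide))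
    have hV2 : (F 1).val < 3 := count3 (F 1) (F 3) (F 6) (F 4) (F 13) (F 5) (F 9) (F 7) (F 15)
      (FneOf 3 1 (by decide)) (FneOf 4 1 (by decide)) (FneOf 5 1 (by decide))
      (FneOf 3 4 (by decide)) (FneOf 3 13 (by decide)) (FneOf 3 5 (by decide)) (FneOf 3 9 (by decide)) (FneOf 3 7 (by decide)) (FneOf 3 15 (by decide))
      (FneOf 4 5 (by decide)) (FneOf 4 9 (by decide)) (FneOf 4 7 (by decide)) (FneOf 4 15 (by decide)) (FneOf 5 7 (by decide)) (FneOf 5 15 (by decide))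
      (hline 1 3 6 (by decide) (by decide) (by decide) (by decide)) (hline 1 4 13 (by decide) (by decide) (by decide) (by decide)) (hline 1 5 9 (by decide) (by decide) (by decide) (by decide)) (hline 1 7 15 (by decide) (by decide) (by decide) (by decide))
    have hV3 : (F 2).val < 3 := count3 (F 2) (F 3) (F 10) (F 4) (F 5) (F 6) (F 12) (F 7) (F 14)
      (FneOf 3 2 (by decide)) (FneOf 4 2 (by decide)) (FneOf 6 2 (by decide))
      (FneOf 3 4 (by decide)) (FneOf 3 5 (by decide)) (FneOf 3 6 (by decide)) (FneOf 3 12 (by decide)) (FneOf 3 7 (by decide)) (FneOf 3 14 (by decide))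
      (FneOf 4 6 (by decide)) (FneOf 4 12 (by decide)) (FneOf 4 7 (by decide)) (FneOf 4 14 (by decide)) (FneOf 6 7 (by decide)) (FneOf 6 14 (by decide))
      (hline 2 3 10 (by decide) (by decide) (by decide) (by decide)) (hline 2 4 5 (by decide) (by decide) (by decide) (by decide)) (hline 2 6 12 (by decide) (by decide) (by decide) (by decide)) (hline 2 7 14 (by decide) (by decide) (by decide) (by decide))
    have hIn : ∀ m : Fin 17, m.val < 3 → P sa sb sc m ∈ ({V₁, V₂, V₃} : Set ProjPlaneR) := by
      intro m hm
      rw [hP ha hb hc m]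
      have hor : m.val = 0 ∨ m.val = 1 ∨ m.val = 2 := by omega
      rcases hor with e|e|e <;> rw [e] <;> simp [Plist]
    have eV1 : f V₁ = P sa sb sc (F 0) := by
      rw [show V₁ = P sa sb sc 0 from (hP ha hb hc 0).symm, hF 0]
    have eV2 : f V₂ = P sa sb sc (F 1) := by
      rw [show V₂ = P sa sb sc 1 from (hP ha hb hc 1).symm, hF 1]
    have eV3 : f V₃ = P sa sb sc (F 2) := by
      rw [show V₃ = P sa sb sc 2 from (hP ha hb hc 2).symm, hF 2]
    have hV12 : V₁ ≠ V₂ := by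
      intro e
      exact absurd (Pinj (0 : Fin 17) 1 (by rw [hP ha hb hc 0, hP ha hb hc 1]; exact e))
        (by decide)
    have hV13 : V₁ ≠ V₃ := by
      intro e
      exact absurd (Pinj (0 : Fin 17) 2 (by rw [hP ha hb hc 0, hP ha hb hc 2]; exact e))
        (by decide)
    have hV23 : V₂ ≠ V₃ := by
      intro e
      exact absurd (Pinj (1 : Fin 17) 2 (by rw [hP ha hb hc 1, hP ha hb hc 2]; exact e))
        (by decide)
    have hm1 : V₁ ∈ Econf α β γ := Set.mem_insert _ _
    have hm2 : V₂ ∈ Econf α β γ := Set.mem_insert_of_mem _ (Set.mem_insert _ _)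
    have hm3 : V₃ ∈ Econf α β γ :=
      Set.mem_insert_of_mem _ (Set.mem_insert_of_mem _ (Set.mem_insert _ _))
    have hfd12 : f V₁ ≠ f V₂ := fun e => hV12 (hbij.injOn hm1 hm2 e)
    have hfd13 : f V₁ ≠ f V₃ := fun e => hV13 (hbij.injOn hm1 hm3 e)
    have hfd23 : f V₂ ≠ f V₃ := fun e => hV23 (hbij.injOn hm2 hm3 e)
    have hx : f V₁ = V₁ ∨ f V₁ = V₂ ∨ f V₁ = V₃ := by
      have h' := hIn (F 0) hV1
      rw [← eV1] at h'
      simpa using h'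
    have hy : f V₂ = V₁ ∨ f V₂ = V₂ ∨ f V₂ = V₃ := by
      have h' := hIn (F 1) hV2
      rw [← eV2] at h'
      simpa using h'
    have hz : f V₃ = V₁ ∨ f V₃ = V₂ ∨ f V₃ = V₃ := by
      have h' := hIn (F 2) hV3
      rw [← eV3] at h'
      simpa using h'
    rw [show f '' ({V₁, V₂, V₃} : Set ProjPlaneR) = {f V₁, f V₂, f V₃} from by
      simp [Set.image_insert_eq]]
    exact triple_eq hV12 hV13 hV23 hfd12 hfd13 hfd23 hx hy hz

end withSigns
end St18

/--
For `α, β, γ ∈ {−1,1}`: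
(i) a three-element subset of `E_{α,β,γ}` is collinear in `ℙ²(ℝ)` iff it is one of the
twenty-one listed triples; and
(ii) every collinearity-preserving bijection `f` of `E_{α,β,γ}` satisfies
`f({V₁,V₂,V₃}) = {V₁,V₂,V₃}`.
-/
theorem stmt_18 (α β γ : ℝ)
    (hα : α = 1 ∨ α = -1) (hβ : β = 1 ∨ β = -1) (hγ : γ = 1 ∨ γ = -1) :
    (∀ p q r : ProjPlaneR, p ∈ Econf α β γ → q ∈ Econf α β γ → r ∈ Econf α β γ →
      p ≠ q → p ≠ r → q ≠ r →
      (ProjCollinear {p, q, r} ↔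
        (({p, q, r} : Set ProjPlaneR) = {V₁, S₁, S₅} ∨
         ({p, q, r} : Set ProjPlaneR) = {V₁, S₂, S₁₄ γ} ∨
         ({p, q, r} : Set ProjPlaneR) = {V₁, S₃, S₆ α} ∨
         ({p, q, r} : Set ProjPlaneR) = {V₁, S₄, S₉ β} ∨
         ({p, q, r} : Set ProjPlaneR) = {V₁, S₇ α, S₈ α} ∨
         ({p, q, r} : Set ProjPlaneR) = {V₁, S₁₀ β, S₁₁ β} ∨
         ({p, q, r} : Set ProjPlaneR) = {V₁, S₁₂ γ, S₁₃ γ} ∨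
         ({p, q, r} : Set ProjPlaneR) = {V₂, S₁, S₄} ∨
         ({p, q, r} : Set ProjPlaneR) = {V₂, S₂, S₁₁ β} ∨
         ({p, q, r} : Set ProjPlaneR) = {V₂, S₃, S₇ α} ∨
         ({p, q, r} : Set ProjPlaneR) = {V₂, S₅, S₁₃ γ} ∨
         ({p, q, r} : Set ProjPlaneR) = {V₂, S₆ α, S₈ α} ∨
         ({p, q, r} : Set ProjPlaneR) = {V₂, S₉ β, S₁₀ β} ∨
         ({p, q, r} : Set ProjPlaneR) = {V₂, S₁₂ γ, S₁₄ γ} ∨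
         ({p, q, r} : Set ProjPlaneR) = {V₃, S₁, S₈ α} ∨
         ({p, q, r} : Set ProjPlaneR) = {V₃, S₂, S₃} ∨
         ({p, q, r} : Set ProjPlaneR) = {V₃, S₄, S₁₀ β} ∨
         ({p, q, r} : Set ProjPlaneR) = {V₃, S₅, S₁₂ γ} ∨
         ({p, q, r} : Set ProjPlaneR) = {V₃, S₆ α, S₇ α} ∨
         ({p, q, r} : Set ProjPlaneR) = {V₃, S₉ β, S₁₁ β} ∨
         ({p, q, r} : Set ProjPlaneR) = {V₃, S₁₃ γ, S₁₄ γ}))) ∧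
    (∀ f : ProjPlaneR → ProjPlaneR,
      Set.BijOn f (Econf α β γ) (Econf α β γ) →
      (∀ p ∈ Econf α β γ, ∀ q ∈ Econf α β γ, ∀ r ∈ Econf α β γ,
        (ProjCollinear {p, q, r} ↔ ProjCollinear {f p, f q, f r})) →
      f '' ({V₁, V₂, V₃} : Set ProjPlaneR) = {V₁, V₂, V₃}) := by
  rcases hα with rfl | rfl <;> rcases hβ with rfl | rfl <;> rcases hγ with rfl | rfl
  · exact St18.main (sa := true) (sb := true) (sc := true) (by norm_num) (by norm_num) (by norm_num)
  · exact St18.main (sa := true) (sb := true) (sc := false) (by norm_num) (by norm_num) (by norm_num)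
  · exact St18.main (sa := true) (sb := false) (sc := true) (by norm_num) (by norm_num) (by norm_num)
  · exact St18.main (sa := true) (sb := false) (sc := false) (by norm_num) (by norm_num) (by norm_num)
  · exact St18.main (sa := false) (sb := true) (sc := true) (by norm_num) (by norm_num) (by norm_num)
  · exact St18.main (sa := false) (sb := true) (sc := false) (by norm_num) (by norm_num) (by norm_num)
  · exact St18.main (sa := false) (sb := false) (sc := true) (by norm_num) (by norm_num) (by norm_num)
  · exact St18.main (sa := false) (sb := false) (sc := false) (by norm_num) (by norm_num) (by norm_num)


end
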